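/- Let G be a finite group, let a, b ∈ G, and let p be a state on G with |p(a)| = 1. Then p(a * b) = p(b * a) = p(a) · p(b). -/

import Mathlib

open scoped ComplexOrder
open Matrix

/-- A function `p : G → ℂ` on a group `G` is positive definite if for every
`n` and every tuple `g : Fin n → G`, the matrix `(p ((g j)⁻¹ * g k))` is
positive semidefinite. -/
def IsPosDefFn {G : Type*} [Group G] (p : G → ℂ) : Prop :=
  ∀ (n : ℕ) (g : Fin n → G),
    (Matrix.of fun j k : Fin n => p ((g j)⁻¹ * g k)).PosSemidef

/-- A state on a group `G` is a positive definite function with `p 1 = 1`. -/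
def IsStateFn {G : Type*} [Group G] (p : G → ℂ) : Prop :=
  IsPosDefFn p ∧ p 1 = 1

lemma state_inv {G : Type*} [Group G] (p : G → ℂ) (hp : IsStateFn p) (x : G) :
    p x⁻¹ = (starRingEnd ℂ) (p x) := by
  have h := (hp.1 2 ![1, x]).isHermitian.apply 1 0
  simpa using h.symm

lemma state_mul_right {G : Type*} [Group G] (a : G) (p : G → ℂ)
    (hp : IsStateFn p) (ha : ‖p a‖ = 1) (c : G) :
    p (c * a) = p a * p c := by
  set g : Fin 3 → G := ![1, a, c⁻¹] with hg
  have hM := hp.1 3 g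
  set v : Fin 3 → ℂ := ![-(p a), 1, 0] with hv
  have hpa : p a * (starRingEnd ℂ) (p a) = 1 := by
    rw [Complex.mul_conj, Complex.normSq_eq_norm_sq, ha]; norm_num
  have h0 : star v ⬝ᵥ (Matrix.of fun j k : Fin 3 => p ((g j)⁻¹ * g k)) *ᵥ v = 0 := by
    simp [dotProduct, Matrix.mulVec, Fin.sum_univ_three, hv, hg, hp.2,
      state_inv p hp a]
    ring_nf
    rw [mul_comm] at hpa
    linear_combination -hpa
  have hz := (hM.dotProduct_mulVec_zero_iff v).mp h0
  have h2 := congrFun hz 2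
  simp [Matrix.mulVec, dotProduct, Fin.sum_univ_three, hv, hg] at h2
  linear_combination h2

theorem stmt_8 {G : Type*} [Group G] [Finite G] (a b : G) (p : G → ℂ)
    (hp : IsStateFn p) (ha : ‖p a‖ = 1) :
    p (a * b) = p a * p b ∧ p (b * a) = p a * p b := by
  have hba : p (b * a) = p a * p b := state_mul_right a p hp ha b
  have ha' : ‖p a⁻¹‖ = 1 := by
    rw [state_inv p hp a, Complex.norm_conj, ha]
  have hab : p (a * b) = p a * p b := by
    have h := state_mul_right a⁻¹ p hp ha' b⁻¹
    have : p (a * b) = (starRingEnd ℂ) (p (b⁻¹ * a⁻¹)) := by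
      rw [← state_inv p hp, _root_.mul_inv_rev, inv_inv, inv_inv]
    rw [this, h, _root_.map_mul, ← state_inv p hp, ← state_inv p hp, inv_inv, inv_inv]
  exact ⟨hab, hba⟩
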